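/- arXiv:1301.6569 — 3 statements merged into one kernel-verified Lean document; each statement's English description precedes it below -/
import Mathlib

section
/- A square matrix Z over a field admits a factorization Z = L·D·U with L lower unitriangular, D invertible diagonal, and U upper unitriangular, if and only if all leading principal minors of Z are nonzero. -/
open Matrix Finset

-- submatrix of product with lower triangular on the left
lemma lower_submatrix_mul {K : Type*} [CommRing K] {n k : ℕ} (h : k ≤ n)
    (L M : Matrix (Fin n) (Fin n) K) (hL : ∀ i j : Fin n, i < j → L i j = 0) :
    (L * M).submatrix (Fin.castLE h) (Fin.castLE h) =
      L.submatrix (Fin.castLE h) (Fin.castLE h) * M.submatrix (Fin.castLE h) (Fin.castLE h) := by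
  ext i j
  simp only [Matrix.mul_apply, Matrix.submatrix_apply]
  set g : ℕ → K := fun l =>
    if hl : l < n then L (Fin.castLE h i) ⟨l, hl⟩ * M ⟨l, hl⟩ (Fin.castLE h j) else 0 with hg
  have h1 : ∑ l : Fin n, L (Fin.castLE h i) l * M l (Fin.castLE h j) = ∑ l ∈ range n, g l := by
    rw [← Fin.sum_univ_eq_sum_range]
    refine Finset.sum_congr rfl fun l _ => ?_
    simp [hg, l.isLt]
  have h2 : ∑ l : Fin k, L (Fin.castLE h i) (Fin.castLE h l) * M (Fin.castLE h l) (Fin.castLE h j)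
      = ∑ l ∈ range k, g l := by
    rw [← Fin.sum_univ_eq_sum_range]
    refine Finset.sum_congr rfl fun l _ => ?_
    simp only [hg]
    rw [dif_pos (lt_of_lt_of_le l.isLt h)]
    rfl
  rw [h1, h2]
  refine (Finset.sum_subset (Finset.range_subset_range.2 h) fun x hx hxk => ?_).symm
  simp only [Finset.mem_range] at hx hxk
  simp only [hg]
  rw [dif_pos hx]
  have : (Fin.castLE h i : Fin n) < ⟨x, hx⟩ := by
    simp only [Fin.lt_def]
    exact lt_of_lt_of_le i.isLt (le_of_not_gt hxk)
  rw [hL _ _ this, zero_mul]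

lemma upper_mul_submatrix {K : Type*} [CommRing K] {n k : ℕ} (h : k ≤ n)
    (M U : Matrix (Fin n) (Fin n) K) (hU : ∀ i j : Fin n, j < i → U i j = 0) :
    (M * U).submatrix (Fin.castLE h) (Fin.castLE h) =
      M.submatrix (Fin.castLE h) (Fin.castLE h) * U.submatrix (Fin.castLE h) (Fin.castLE h) := by
  ext i j
  simp only [Matrix.mul_apply, Matrix.submatrix_apply]
  set g : ℕ → K := fun l =>
    if hl : l < n then M (Fin.castLE h i) ⟨l, hl⟩ * U ⟨l, hl⟩ (Fin.castLE h j) else 0 with hg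
  have h1 : ∑ l : Fin n, M (Fin.castLE h i) l * U l (Fin.castLE h j) = ∑ l ∈ range n, g l := by
    rw [← Fin.sum_univ_eq_sum_range]
    refine Finset.sum_congr rfl fun l _ => ?_
    simp [hg, l.isLt]
  have h2 : ∑ l : Fin k, M (Fin.castLE h i) (Fin.castLE h l) * U (Fin.castLE h l) (Fin.castLE h j)
      = ∑ l ∈ range k, g l := by
    rw [← Fin.sum_univ_eq_sum_range]
    refine Finset.sum_congr rfl fun l _ => ?_
    simp only [hg]
    rw [dif_pos (lt_of_lt_of_le l.isLt h)]
    rfl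
  rw [h1, h2]
  refine (Finset.sum_subset (Finset.range_subset_range.2 h) fun x hx hxk => ?_).symm
  simp only [Finset.mem_range] at hx hxk
  simp only [hg]
  rw [dif_pos hx]
  have : (Fin.castLE h j : Fin n) < ⟨x, hx⟩ := by
    simp only [Fin.lt_def]
    exact lt_of_lt_of_le j.isLt (le_of_not_gt hxk)
  rw [hU _ _ this, mul_zero]

lemma exists_ldu {K : Type*} [Field K] :
    ∀ (n : ℕ) (Z : Matrix (Fin n) (Fin n) K),
      (∀ (k : ℕ) (h : k ≤ n), (Z.submatrix (Fin.castLE h) (Fin.castLE h)).det ≠ 0) →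
      ∃ L D U : Matrix (Fin n) (Fin n) K,
        (∀ i j : Fin n, i < j → L i j = 0) ∧ (∀ i : Fin n, L i i = 1) ∧
        (∃ d : Fin n → K, D = Matrix.diagonal d ∧ ∀ i : Fin n, d i ≠ 0) ∧
        (∀ i j : Fin n, j < i → U i j = 0) ∧ (∀ i : Fin n, U i i = 1) ∧
        Z = L * D * U := by
  intro n
  induction n with
  | zero =>
      intro Z _
      refine ⟨1, 1, 1, fun i => i.elim0, fun i => i.elim0,
        ⟨fun i => i.elim0, Subsingleton.elim _ _, fun i => i.elim0⟩,
        fun i => i.elim0, fun i => i.elim0, Subsingleton.elim _ _⟩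
  | succ n ih =>
      intro Z hZ
      set W : Matrix (Fin n ⊕ Fin 1) (Fin n ⊕ Fin 1) K :=
        Z.submatrix finSumFinEquiv finSumFinEquiv with hW
      set A := W.toBlocks₁₁ with hAdef
      set b := W.toBlocks₁₂ with hbdef
      set c := W.toBlocks₂₁ with hcdef
      set dd := W.toBlocks₂₂ with hddef
      -- leading minors of A
      have hAm : ∀ (k : ℕ) (hk : k ≤ n),
          (A.submatrix (Fin.castLE hk) (Fin.castLE hk)).det ≠ 0 := by
        intro k hk
        have hk' : k ≤ n + 1 := hk.trans (Nat.le_succ n)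
        have : A.submatrix (Fin.castLE hk) (Fin.castLE hk)
            = Z.submatrix (Fin.castLE hk') (Fin.castLE hk') := by
          ext i j; rfl
        rw [this]; exact hZ k hk'
      obtain ⟨L', D', U', hL1, hL2, ⟨d', hD', hd'⟩, hU1, hU2, hA⟩ := ih A hAm
      have hdetL' : L'.det = 1 := by
        rw [Matrix.det_of_lowerTriangular L' ?_]
        · exact Finset.prod_eq_one fun i _ => hL2 i
        · intro i j hij
          exact hL1 i j (by exact hij)
      have hdetU' : U'.det = 1 := by
        rw [Matrix.det_of_upperTriangular (M := U') ?_]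
        · exact Finset.prod_eq_one fun i _ => hU2 i
        · intro i j hij
          exact hU1 i j hij
      have hdetD' : IsUnit D'.det := by
        rw [hD', Matrix.det_diagonal]
        exact (Finset.prod_ne_zero_iff.2 fun i _ => hd' i).isUnit
      have hLD : IsUnit (L' * D').det := by
        rw [Matrix.det_mul, hdetL', one_mul]; exact hdetD'
      have hDU : IsUnit (D' * U').det := by
        rw [Matrix.det_mul, hdetU', mul_one]; exact hdetD'
      set y : Matrix (Fin n) (Fin 1) K := (L' * D')⁻¹ * b with hy
      set x : Matrix (Fin 1) (Fin n) K := c * (D' * U')⁻¹ with hx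
      set s : K := (dd - x * D' * y) 0 0 with hs
      have hsM : Matrix.diagonal (fun _ : Fin 1 => s) = dd - x * D' * y := by
        ext i j
        have hi : i = 0 := Subsingleton.elim _ _
        have hj : j = 0 := Subsingleton.elim _ _
        subst hi; subst hj
        simp [hs]
      set P : Matrix (Fin n ⊕ Fin 1) (Fin n ⊕ Fin 1) K := Matrix.fromBlocks L' 0 x 1 with hP
      set Q : Matrix (Fin n ⊕ Fin 1) (Fin n ⊕ Fin 1) K :=
        Matrix.fromBlocks D' 0 0 (Matrix.diagonal fun _ => s) with hQ
      set R : Matrix (Fin n ⊕ Fin 1) (Fin n ⊕ Fin 1) K := Matrix.fromBlocks U' y 0 1 with hR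
      have hWPQR : W = P * Q * R := by
        rw [hP, hQ, hR, Matrix.fromBlocks_multiply, Matrix.fromBlocks_multiply]
        simp only [Matrix.mul_zero, Matrix.zero_mul, add_zero, zero_add, Matrix.mul_one,
          Matrix.one_mul]
        have hWblocks : W = Matrix.fromBlocks A b c dd := (Matrix.fromBlocks_toBlocks W).symm
        rw [hWblocks, Matrix.fromBlocks_inj]
        refine ⟨hA, ?_, ?_, ?_⟩
        · rw [hy, Matrix.mul_nonsing_inv_cancel_left _ _ hLD]
        · rw [hx, Matrix.mul_assoc (c * (D' * U')⁻¹),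
            Matrix.nonsing_inv_mul_cancel_right _ _ hDU]
        · rw [hsM]
          abel
      have hsne : s ≠ 0 := by
        have hdetZ : Z.det ≠ 0 := by
          have := hZ (n + 1) (le_refl _)
          have hZsub : Z.submatrix (Fin.castLE (le_refl (n+1))) (Fin.castLE (le_refl (n+1))) = Z := by
            ext i j; rfl
          rwa [hZsub] at this
        have hdetW : W.det = Z.det := by
          rw [hW, Matrix.det_submatrix_equiv_self]
        intro h0
        apply hdetZ
        rw [← hdetW, hWPQR, Matrix.det_mul, Matrix.det_mul, hQ,
          Matrix.det_fromBlocks_zero₂₁, Matrix.det_diagonal]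
        simp [h0]
      refine ⟨P.submatrix (finSumFinEquiv (m := n) (n := 1)).symm (finSumFinEquiv (m := n) (n := 1)).symm, Q.submatrix (finSumFinEquiv (m := n) (n := 1)).symm (finSumFinEquiv (m := n) (n := 1)).symm, R.submatrix (finSumFinEquiv (m := n) (n := 1)).symm (finSumFinEquiv (m := n) (n := 1)).symm,
        ?_, ?_, ?_, ?_, ?_, ?_⟩
      · -- L lower triangular
        intro i j hij
        simp only [Matrix.submatrix_apply]
        rcases hpi : (finSumFinEquiv (m := n) (n := 1)).symm i with a | a <;> rcases hpj : (finSumFinEquiv (m := n) (n := 1)).symm j with b' | b' <;>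
          rw [Equiv.symm_apply_eq] at hpi hpj
        · have hab : a < b' := by
            rw [hpi, hpj] at hij
            rw [finSumFinEquiv_apply_left, finSumFinEquiv_apply_left] at hij
            simpa only [Fin.lt_def, Fin.coe_castAdd] using hij
          simpa [hP] using hL1 a b' hab
        · simp [hP]
        · exfalso
          rw [hpi, hpj] at hij
          simp only [finSumFinEquiv_apply_left, finSumFinEquiv_apply_right, Fin.lt_def,
            Fin.coe_castAdd, Fin.coe_natAdd] at hij
          omega
        · exfalso
          rw [hpi, hpj] at hij
          simp only [finSumFinEquiv_apply_right, Fin.lt_def, Fin.coe_natAdd] at hij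
          omega
      · -- L unit diagonal
        intro i
        simp only [Matrix.submatrix_apply]
        rcases (finSumFinEquiv (m := n) (n := 1)).symm i with a | a
        · simpa [hP] using hL2 a
        · simp [hP, Matrix.one_apply_eq]
      · -- D diagonal
        refine ⟨(Sum.elim d' fun _ => s) ∘ (finSumFinEquiv (m := n) (n := 1)).symm, ?_, ?_⟩
        · rw [hQ, hD', Matrix.fromBlocks_diagonal, Matrix.submatrix_diagonal_equiv]
        · intro i
          rcases h' : (finSumFinEquiv (m := n) (n := 1)).symm i with a | a <;> simp [h', hd', hsne]
      · -- U upper triangular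
        intro i j hij
        simp only [Matrix.submatrix_apply]
        rcases hpi : (finSumFinEquiv (m := n) (n := 1)).symm i with a | a <;> rcases hpj : (finSumFinEquiv (m := n) (n := 1)).symm j with b' | b' <;>
          rw [Equiv.symm_apply_eq] at hpi hpj
        · have hab : b' < a := by
            rw [hpi, hpj] at hij
            rw [finSumFinEquiv_apply_left, finSumFinEquiv_apply_left] at hij
            simpa only [Fin.lt_def, Fin.coe_castAdd] using hij
          simpa [hR] using hU1 a b' hab
        · exfalso
          rw [hpi, hpj] at hij
          simp only [finSumFinEquiv_apply_left, finSumFinEquiv_apply_right, Fin.lt_def,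
            Fin.coe_castAdd, Fin.coe_natAdd] at hij
          omega
        · simp [hR]
        · exfalso
          rw [hpi, hpj] at hij
          simp only [finSumFinEquiv_apply_right, Fin.lt_def, Fin.coe_natAdd] at hij
          omega
      · intro i
        simp only [Matrix.submatrix_apply]
        rcases (finSumFinEquiv (m := n) (n := 1)).symm i with a | a
        · simpa [hR] using hU2 a
        · simp [hR, Matrix.one_apply_eq]
      · -- factorization
        have hZW : Z = W.submatrix (finSumFinEquiv (m := n) (n := 1)).symm (finSumFinEquiv (m := n) (n := 1)).symm := by
          ext i j
          simp [hW]
        rw [hZW, hWPQR, Matrix.submatrix_mul_equiv, Matrix.submatrix_mul_equiv]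

/-- A square matrix over a field has an LDU factorization (L lower unitriangular,
D invertible diagonal, U upper unitriangular) iff all leading principal minors
are nonzero. -/
theorem stmt_1 {K : Type*} [Field K] (n : ℕ) (Z : Matrix (Fin n) (Fin n) K) :
    (∃ L D U : Matrix (Fin n) (Fin n) K,
        (∀ i j : Fin n, i < j → L i j = 0) ∧ (∀ i : Fin n, L i i = 1) ∧
        (∃ d : Fin n → K, D = Matrix.diagonal d ∧ ∀ i : Fin n, d i ≠ 0) ∧
        (∀ i j : Fin n, j < i → U i j = 0) ∧ (∀ i : Fin n, U i i = 1) ∧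
        Z = L * D * U) ↔
      ∀ (k : ℕ) (h : k ≤ n), (Z.submatrix (Fin.castLE h) (Fin.castLE h)).det ≠ 0 := by
  constructor
  · rintro ⟨L, D, U, hL1, hL2, ⟨d, hD, hd⟩, hU1, hU2, hfac⟩ k h
    rw [hfac, upper_mul_submatrix h _ _ hU1, lower_submatrix_mul h _ _ hL1,
      Matrix.det_mul, Matrix.det_mul]
    have hdL : (L.submatrix (Fin.castLE h) (Fin.castLE h)).det = 1 := by
      rw [Matrix.det_of_lowerTriangular _ ?_]
      · exact Finset.prod_eq_one fun i _ => hL2 _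
      · intro i j hij
        have hij' : i < j := hij
        apply hL1
        rw [Fin.lt_def] at hij' ⊢
        simpa using hij'
    have hdU : (U.submatrix (Fin.castLE h) (Fin.castLE h)).det = 1 := by
      rw [Matrix.det_of_upperTriangular (M := U.submatrix (Fin.castLE h) (Fin.castLE h)) ?_]
      · exact Finset.prod_eq_one fun i _ => hU2 _
      · intro i j hij
        have hij' : j < i := hij
        apply hU1
        rw [Fin.lt_def] at hij' ⊢
        simpa using hij'
    have hdD : (D.submatrix (Fin.castLE h) (Fin.castLE h)).det ≠ 0 := by
      rw [hD, Matrix.submatrix_diagonal d _ (Fin.castLE_injective h), Matrix.det_diagonal]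
      exact Finset.prod_ne_zero_iff.2 fun i _ => hd _
    rw [hdL, hdU, one_mul, mul_one]
    exact hdD
  · exact fun h => exists_ldu n Z h
end

section
/- For an integer n ≥ 1 and the determinant polynomial det(z) on p×p complex matrices, the Cayley-type identity holds: det(∂/∂z) det(z)^n = n(n+1)⋯(n+p−1) · det(z)^{n−1}, where det(∂/∂z) is the differential operator obtained by formally substituting the partial derivatives ∂/∂z_{ij} into the determinant. -/
open MvPolynomial Equiv

/-- The generic p×p matrix of indeterminates. -/
noncomputable def genMatrix (p : ℕ) : Matrix (Fin p) (Fin p) (MvPolynomial (Fin p × Fin p) ℚ) :=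
  Matrix.of fun i j => X (i, j)

/-- The operator det(∂/∂z) = Σ_σ sgn(σ) ∏_i ∂/∂z_{iσ(i)} applied to a polynomial. -/
noncomputable def detDerivApply (p : ℕ) (P : MvPolynomial (Fin p × Fin p) ℚ) :
    MvPolynomial (Fin p × Fin p) ℚ :=
  ∑ σ : Equiv.Perm (Fin p),
    (Equiv.Perm.sign σ : ℤ) •
      (List.finRange p).foldr (fun i Q => pderiv (i, σ i) Q) P

theorem Equiv.Perm.apply_inv_self {α : Type*} (f : Equiv.Perm α) (x : α) : f (f⁻¹ x) = x :=
  Equiv.Perm.eq_inv_iff_eq.mp rfl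

theorem Equiv.Perm.inv_apply_self {α : Type*} (f : Equiv.Perm α) (x : α) : f⁻¹ (f x) = x :=
  Equiv.Perm.inv_eq_iff_eq.mpr rfl

namespace Cayley

variable {p : ℕ}

abbrev Rp (p : ℕ) := MvPolynomial (Fin p × Fin p) ℚ

noncomputable def DopL (l : List (Fin p × Fin p)) (P : Rp p) : Rp p :=
  l.foldr (fun v Q => pderiv v Q) P

@[simp] lemma DopL_nil (P : Rp p) : DopL [] P = P := rfl

@[simp] lemma DopL_cons (v : Fin p × Fin p) (l : List (Fin p × Fin p)) (P : Rp p) :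
    DopL (v :: l) P = pderiv v (DopL l P) := rfl

lemma DopL_add (l : List (Fin p × Fin p)) (P Q : Rp p) :
    DopL l (P + Q) = DopL l P + DopL l Q := by
  induction l with
  | nil => rfl
  | cons v l ih => simp [ih]

lemma DopL_zsmul (l : List (Fin p × Fin p)) (c : ℤ) (P : Rp p) :
    DopL l (c • P) = c • DopL l P := by
  induction l with
  | nil => rfl
  | cons v l ih => rw [DopL_cons, ih, DopL_cons, map_zsmul]

lemma DopL_qsmul (l : List (Fin p × Fin p)) (c : ℚ) (P : Rp p) :
    DopL l (c • P) = c • DopL l P := by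
  induction l with
  | nil => rfl
  | cons v l ih => simp [ih]

@[simp] lemma DopL_zero (l : List (Fin p × Fin p)) : DopL l (0 : Rp p) = 0 := by
  induction l with
  | nil => rfl
  | cons v l ih => simp [ih]

lemma DopL_sum {ι : Type*} (l : List (Fin p × Fin p)) (s : Finset ι) (f : ι → Rp p) :
    DopL l (∑ i ∈ s, f i) = ∑ i ∈ s, DopL l (f i) := by
  classical
  induction s using Finset.induction_on with
  | empty => simp
  | insert _ _ h ih => rw [Finset.sum_insert h, DopL_add, ih, Finset.sum_insert h]

noncomputable def Dop {s : ℕ} (f : Fin s → Fin p × Fin p) (P : Rp p) : Rp p :=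
  DopL ((List.finRange s).map f) P

lemma Dop_eq_foldr {s : ℕ} (f : Fin s → Fin p × Fin p) (P : Rp p) :
    Dop f P = (List.finRange s).foldr (fun k Q => pderiv (f k) Q) P := by
  rw [Dop, DopL, List.foldr_map]

lemma Dop_succ {s : ℕ} (f : Fin (s + 1) → Fin p × Fin p) (P : Rp p) :
    Dop f P = pderiv (f 0) (Dop (f ∘ Fin.succ) P) := by
  rw [Dop, List.finRange_succ, List.map_cons, DopL_cons, Dop, List.map_map]

@[simp] lemma Dop_zero_fn (f : Fin 0 → Fin p × Fin p) (P : Rp p) : Dop f P = P := rfl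

/-- derivative of a product of distinct variables, missing variable case -/
lemma pderiv_prod_eq_zero (F : Finset (Fin p)) (g : Fin p → Fin p × Fin p)
    (v : Fin p × Fin p) (h : ∀ i ∈ F, g i ≠ v) :
    pderiv v (∏ i ∈ F, X (g i) : Rp p) = 0 := by
  classical
  induction F using Finset.induction_on with
  | empty => simp
  | @insert k F hk ih =>
    rw [Finset.prod_insert hk, pderiv_mul, ih (fun i hi => h i (Finset.mem_insert_of_mem hi))]
    have : (pderiv v) (X (g k) : Rp p) = 0 := by
      rw [pderiv_X]
      exact Pi.single_eq_of_ne (h k (Finset.mem_insert_self k F)) 1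
    simp [this]

lemma pderiv_prod_eq (F : Finset (Fin p)) (g : Fin p → Fin p × Fin p) (j : Fin p)
    (hj : j ∈ F) (hinj : ∀ i ∈ F, g i = g j → i = j) :
    pderiv (g j) (∏ i ∈ F, X (g i) : Rp p) = ∏ i ∈ F.erase j, X (g i) := by
  classical
  rw [← Finset.prod_erase_mul F _ hj, pderiv_mul]
  have h1 : pderiv (g j) (∏ i ∈ F.erase j, X (g i) : Rp p) = 0 := by
    apply pderiv_prod_eq_zero
    intro i hi hgi
    exact (Finset.ne_of_mem_erase hi) (hinj i (Finset.mem_of_mem_erase hi) hgi)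
  rw [h1]
  simp [pderiv_X]


lemma image_univ_succ {s : ℕ} {α : Type*} [DecidableEq α] (b : Fin (s+1) → α) :
    Finset.univ.image b = insert (b 0) (Finset.univ.image (b ∘ Fin.succ)) := by
  ext x
  simp only [Finset.mem_image, Finset.mem_insert, Finset.mem_univ, true_and]
  constructor
  · rintro ⟨i, rfl⟩
    rcases Fin.eq_zero_or_eq_succ i with h | ⟨j, rfl⟩
    · left; rw [h]
    · right; exact ⟨j, rfl⟩
  · rintro (rfl | ⟨j, rfl⟩)
    · exact ⟨0, rfl⟩
    · exact ⟨j.succ, rfl⟩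

lemma DopM {s : ℕ} (a b : Fin s → Fin p) (hb : Function.Injective b)
    (σ : Perm (Fin p)) (F : Finset (Fin p)) (hF : ∀ k, b k ∈ F) :
    Dop (fun i => (a i, b i)) (∏ i ∈ F, X (σ i, i) : Rp p) =
      if (∀ k, σ (b k) = a k) then ∏ i ∈ F \ Finset.univ.image b, X (σ i, i) else 0 := by
  classical
  induction s generalizing F with
  | zero =>
    rw [Dop_zero_fn, if_pos (by intro k; exact k.elim0)]
    congr 1
    have : (Finset.univ : Finset (Fin 0)).image b = ∅ := rfl
    rw [this, Finset.sdiff_empty]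
  | succ s ih =>
    rw [Dop_succ]
    have hbs : Function.Injective (b ∘ Fin.succ) :=
      hb.comp (Fin.succ_injective s)
    have ihs := ih (a ∘ Fin.succ) (b ∘ Fin.succ) hbs F (fun k => hF k.succ)
    rw [show ((fun i => (a i, b i)) ∘ Fin.succ) = (fun i : Fin s => ((a ∘ Fin.succ) i, (b ∘ Fin.succ) i)) from rfl]
    rw [ihs]
    by_cases hc : ∀ k : Fin s, σ ((b ∘ Fin.succ) k) = (a ∘ Fin.succ) k
    · rw [if_pos hc]
      have hb0F' : b 0 ∈ F \ Finset.univ.image (b ∘ Fin.succ) := by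
        rw [Finset.mem_sdiff]
        refine ⟨hF 0, ?_⟩
        simp only [Finset.mem_image, Finset.mem_univ, true_and]
        rintro ⟨j, hj⟩
        exact Fin.succ_ne_zero j (hb hj)
      by_cases h0 : σ (b 0) = a 0
      · have key : (a 0, b 0) = ((fun i => (σ i, i)) (b 0)) := by rw [← h0]
        rw [key, pderiv_prod_eq _ (fun i => (σ i, i)) (b 0) hb0F'
          (fun i _ h => congrArg Prod.snd h)]
        rw [if_pos (by intro k; cases k using Fin.cases with
          | zero => exact h0
          | succ j => exact hc j)]
        congr 1
        rw [image_univ_succ b, Finset.sdiff_insert]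
      · rw [pderiv_prod_eq_zero _ (fun i => (σ i, i)) (a 0, b 0)
          (by rintro i _ h
              injection h with h1 h2
              exact h0 (by rw [h2] at h1; exact h1)),
          if_neg (fun hall => h0 (hall 0))]
    · rw [if_neg hc, map_zero, if_neg (fun hall => hc (fun k => hall k.succ))]

lemma genMatrix_det_eq :
    (genMatrix p).det = ∑ σ : Perm (Fin p), Perm.sign σ • ∏ i, (X (σ i, i) : Rp p) := by
  rw [Matrix.det_apply]
  rfl

lemma Dop_det {s : ℕ} (a b : Fin s → Fin p) (hb : Function.Injective b) :
    Dop (fun i => (a i, b i)) (genMatrix p).det =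
      ∑ σ : Perm (Fin p), (Perm.sign σ : ℤ) •
        (if (∀ k, σ (b k) = a k) then ∏ i ∈ Finset.univ \ Finset.univ.image b, X (σ i, i) else 0) := by
  rw [genMatrix_det_eq, Dop, DopL_sum]
  refine Finset.sum_congr rfl (fun σ _ => ?_)
  rw [Units.smul_def, DopL_zsmul, ← Dop, DopM a b hb σ Finset.univ (fun k => Finset.mem_univ _)]


section Emb
variable {t : ℕ}

lemma t_le (r : Fin t ↪ Fin p) : t ≤ p := by
  simpa using Fintype.card_le_of_embedding r

lemma card_compl_range (r : Fin t ↪ Fin p) :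
    ((Finset.univ.map r)ᶜ : Finset (Fin p)).card = p - t := by
  rw [Finset.card_compl, Finset.card_map, Finset.card_univ, Fintype.card_fin]
  simp

noncomputable def cEmb (r : Fin t ↪ Fin p) : Fin (p - t) ↪ Fin p :=
  ((Finset.univ.map r)ᶜ.orderEmbOfFin (card_compl_range r)).toEmbedding

lemma cEmb_mem_compl (r : Fin t ↪ Fin p) (m : Fin (p - t)) :
    cEmb r m ∈ ((Finset.univ.map r)ᶜ : Finset (Fin p)) :=
  Finset.orderEmbOfFin_mem _ _ _

lemma cEmb_not_mem_range (r : Fin t ↪ Fin p) (m : Fin (p - t)) :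
    cEmb r m ∉ Set.range r := by
  have h := cEmb_mem_compl r m
  rw [Finset.mem_compl, Finset.mem_map] at h
  rintro ⟨i, hi⟩
  exact h ⟨i, Finset.mem_univ i, hi⟩

lemma exists_cEmb_of_not_range (r : Fin t ↪ Fin p) {x : Fin p} (h : x ∉ Set.range r) :
    ∃ m, cEmb r m = x := by
  have hx : x ∈ ((Finset.univ.map r)ᶜ : Finset (Fin p)) := by
    rw [Finset.mem_compl, Finset.mem_map]
    rintro ⟨i, _, hi⟩
    exact h ⟨i, hi⟩
  have := Finset.range_orderEmbOfFin ((Finset.univ.map r)ᶜ) (card_compl_range r)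
  have hx2 : x ∈ Set.range ((Finset.univ.map r)ᶜ.orderEmbOfFin (card_compl_range r)) := by
    rw [this]; exact hx
  obtain ⟨m, hm⟩ := hx2
  exact ⟨m, hm⟩

noncomputable def sumEquiv (r : Fin t ↪ Fin p) : (Fin t ⊕ Fin (p - t)) ≃ Fin p :=
  Equiv.ofBijective (Sum.elim r (cEmb r)) (by
    constructor
    · intro x y hxy
      cases x with
      | inl i => cases y with
        | inl j => simp only [Sum.elim_inl] at hxy; exact congrArg Sum.inl (r.injective hxy)
        | inr m => exact absurd ⟨i, hxy⟩ (cEmb_not_mem_range r m)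
      | inr m => cases y with
        | inl j => exact absurd ⟨j, hxy.symm⟩ (cEmb_not_mem_range r m)
        | inr m' => simp only [Sum.elim_inr] at hxy; exact congrArg Sum.inr ((cEmb r).injective hxy)
    · intro x
      by_cases hx : x ∈ Set.range r
      · obtain ⟨i, hi⟩ := hx; exact ⟨Sum.inl i, hi⟩
      · obtain ⟨m, hm⟩ := exists_cEmb_of_not_range r hx; exact ⟨Sum.inr m, hm⟩)

@[simp] lemma sumEquiv_inl (r : Fin t ↪ Fin p) (i : Fin t) :
    sumEquiv r (Sum.inl i) = r i := rfl

@[simp] lemma sumEquiv_inr (r : Fin t ↪ Fin p) (m : Fin (p - t)) :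
    sumEquiv r (Sum.inr m) = cEmb r m := rfl

lemma sdiff_image_eq (c : Fin t ↪ Fin p) :
    Finset.univ \ Finset.univ.image c = Finset.univ.image (cEmb c) := by
  ext x
  simp only [Finset.mem_sdiff, Finset.mem_univ, true_and, Finset.mem_image]
  constructor
  · intro hx
    have : x ∉ Set.range c := by rintro ⟨i, hi⟩; exact hx ⟨i, hi⟩
    obtain ⟨m, hm⟩ := exists_cEmb_of_not_range c this
    exact ⟨m, hm⟩
  · rintro ⟨m, rfl⟩ ⟨i, hi⟩
    exact cEmb_not_mem_range c m ⟨i, hi⟩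

/-- extension of a permutation of `Fin t` along the embedding `r`, identity elsewhere -/
noncomputable def extPermL (r : Fin t ↪ Fin p) (π : Perm (Fin t)) : Perm (Fin p) :=
  (sumEquiv r).permCongr (π.sumCongr (Equiv.refl (Fin (p - t))))

@[simp] lemma extPermL_apply (r : Fin t ↪ Fin p) (π : Perm (Fin t)) (i : Fin t) :
    extPermL r π (r i) = r (π i) := by
  have : (sumEquiv r).symm (r i) = Sum.inl i := by
    rw [Equiv.symm_apply_eq]; rfl
  simp [extPermL, Equiv.permCongr_apply, this]

lemma extPermL_fix (r : Fin t ↪ Fin p) (π : Perm (Fin t)) {x : Fin p}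
    (hx : x ∉ Set.range r) : extPermL r π x = x := by
  obtain ⟨m, rfl⟩ := exists_cEmb_of_not_range r hx
  have : (sumEquiv r).symm (cEmb r m) = Sum.inr m := by
    rw [Equiv.symm_apply_eq]; rfl
  simp [extPermL, Equiv.permCongr_apply, this]

@[simp] lemma sign_extPermL (r : Fin t ↪ Fin p) (π : Perm (Fin t)) :
    Perm.sign (extPermL r π) = Perm.sign π := by
  rw [extPermL, Perm.sign_permCongr, Perm.sign_sumCongr]
  simp

noncomputable def extPermR (c : Fin t ↪ Fin p) (β : Perm (Fin (p - t))) : Perm (Fin p) :=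
  (sumEquiv c).permCongr ((Equiv.refl (Fin t)).sumCongr β)

@[simp] lemma extPermR_apply (c : Fin t ↪ Fin p) (β : Perm (Fin (p - t))) (m : Fin (p - t)) :
    extPermR c β (cEmb c m) = cEmb c (β m) := by
  have : (sumEquiv c).symm (cEmb c m) = Sum.inr m := by
    rw [Equiv.symm_apply_eq]; rfl
  simp [extPermR, Equiv.permCongr_apply, this]

@[simp] lemma extPermR_fix (c : Fin t ↪ Fin p) (β : Perm (Fin (p - t))) (k : Fin t) :
    extPermR c β (c k) = c k := by
  have : (sumEquiv c).symm (c k) = Sum.inl k := by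
    rw [Equiv.symm_apply_eq]; rfl
  simp [extPermR, Equiv.permCongr_apply, this]

@[simp] lemma sign_extPermR (c : Fin t ↪ Fin p) (β : Perm (Fin (p - t))) :
    Perm.sign (extPermR c β) = Perm.sign β := by
  rw [extPermR, Perm.sign_permCongr, Perm.sign_sumCongr]
  simp

@[simp] lemma sumEquiv_symm_emb (c : Fin t ↪ Fin p) (k : Fin t) :
    (sumEquiv c).symm (c k) = Sum.inl k := by
  rw [Equiv.symm_apply_eq]; rfl

@[simp] lemma sumEquiv_symm_cEmb (c : Fin t ↪ Fin p) (m : Fin (p - t)) :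
    (sumEquiv c).symm (cEmb c m) = Sum.inr m := by
  rw [Equiv.symm_apply_eq]; rfl

/-- the signed complementary minor, defined via iterated derivatives of det -/
noncomputable def Nmin (r c : Fin t ↪ Fin p) : Rp p :=
  Dop (fun i => (r i, c i)) (genMatrix p).det

/-- Lemma 1: permuting the column assignment multiplies by the sign. -/
lemma Dop_det_perm (r c : Fin t ↪ Fin p) (π : Perm (Fin t)) :
    Dop (fun i => (r i, c (π i))) (genMatrix p).det = (Perm.sign π : ℤ) • Nmin r c := by
  classical
  rw [Nmin, Dop_det (fun i => r i) (fun i => c (π i)) (c.injective.comp π.injective),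
    Dop_det (fun i => r i) (fun i => c i) c.injective]
  have himg : Finset.univ.image (fun i => c (π i)) = Finset.univ.image (fun i => c i) := by
    ext x
    simp only [Finset.mem_image, Finset.mem_univ, true_and]
    constructor
    · rintro ⟨i, rfl⟩; exact ⟨π i, rfl⟩
    · rintro ⟨j, rfl⟩; exact ⟨π⁻¹ j, by simp⟩
  set τ : Perm (Fin p) := extPermL r π⁻¹ with hτ
  rw [← Equiv.sum_comp (Equiv.mulLeft τ)
    (fun σ => (Perm.sign σ : ℤ) • (if (∀ k, σ (c (π k)) = r k)
      then ∏ i ∈ Finset.univ \ Finset.univ.image (fun i => c (π i)), (X (σ i, i) : Rp p) else 0)),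
    Finset.smul_sum]
  refine Finset.sum_congr rfl (fun σ' _ => ?_)
  simp only [Equiv.coe_mulLeft, Perm.mul_apply]
  have hcond : (∀ k, τ (σ' (c (π k))) = r k) ↔ (∀ k, σ' (c k) = r k) := by
    constructor
    · intro h j
      have h2 := h (π⁻¹ j)
      rw [Equiv.Perm.apply_inv_self] at h2
      have h3 : τ (r j) = r (π⁻¹ j) := by rw [hτ, extPermL_apply]
      rw [← h3] at h2
      exact τ.injective h2
    · intro h k
      rw [h (π k), hτ, extPermL_apply, Equiv.Perm.inv_apply_self]
  by_cases hc : ∀ k, σ' (c k) = r k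
  · simp only [if_pos (hcond.mpr hc), if_pos hc, himg]
    have hmon : ∏ i ∈ Finset.univ \ Finset.univ.image (fun i => c i), (X (τ (σ' i), i) : Rp p)
        = ∏ i ∈ Finset.univ \ Finset.univ.image (fun i => c i), (X (σ' i, i) : Rp p) := by
      refine Finset.prod_congr rfl (fun i hi => ?_)
      have : σ' i ∉ Set.range r := by
        rintro ⟨k, hk⟩
        rw [← hc k] at hk
        have := σ'.injective hk
        rw [Finset.mem_sdiff] at hi
        exact hi.2 (Finset.mem_image.mpr ⟨k, Finset.mem_univ k, this.symm ▸ rfl⟩)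
      rw [extPermL_fix r π⁻¹ this]
    rw [hmon, Perm.sign_mul, Units.val_mul, mul_smul]
    congr 2
    rw [hτ, sign_extPermL, Perm.sign_inv]
  · simp only [hcond, if_neg hc, smul_zero]

/-- Lemma D: Nmin equals the complementary minor up to the structural sign. -/
lemma Nmin_eq_det (r c : Fin t ↪ Fin p) :
    Nmin r c = (Perm.sign ((sumEquiv c).symm.trans (sumEquiv r)) : ℤ) •
      ((genMatrix p).submatrix (cEmb r) (cEmb c)).det := by
  classical
  set τ₀ : Perm (Fin p) := (sumEquiv c).symm.trans (sumEquiv r) with hτ₀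
  rw [Nmin, Dop_det (fun i => r i) (fun i => c i) c.injective, Matrix.det_apply, Finset.smul_sum]
  have key : ∀ σ : Perm (Fin p), (Perm.sign σ : ℤ) • (if (∀ k, σ (c k) = r k)
      then ∏ i ∈ Finset.univ \ Finset.univ.image (fun i => c i), (X (σ i, i) : Rp p) else 0)
      = if (∀ k, σ (c k) = r k)
      then (Perm.sign σ : ℤ) • ∏ i ∈ Finset.univ \ Finset.univ.image (fun i => c i), (X (σ i, i) : Rp p) else 0 := by
    intro σ; split <;> simp
  simp only [key]
  rw [← Finset.sum_filter]
  refine (Finset.sum_bij (fun (β : Perm (Fin (p - t))) _ => τ₀ * extPermR c β) ?_ ?_ ?_ ?_).symm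
  · intro β _
    rw [Finset.mem_filter]
    refine ⟨Finset.mem_univ _, fun k => ?_⟩
    rw [Perm.mul_apply, extPermR_fix, hτ₀]
    simp only [Equiv.trans_apply, sumEquiv_symm_emb, sumEquiv_inl]
  · intro β₁ _ β₂ _ h
    have h2 := mul_left_cancel h
    ext m
    have := congrArg (fun (ρ : Perm (Fin p)) => ρ (cEmb c m)) h2
    simp only [extPermR_apply] at this
    exact congrArg Fin.val ((cEmb c).injective this)
  · intro σ hσ
    rw [Finset.mem_filter] at hσ
    obtain ⟨-, hcond⟩ := hσ
    have hnr : ∀ m, σ (cEmb c m) ∉ Set.range r := by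
      intro m ⟨k, hk⟩
      rw [← hcond k] at hk
      exact cEmb_not_mem_range c m ⟨k, σ.injective hk⟩
    have hex : ∀ m, ∃ m', cEmb r m' = σ (cEmb c m) := fun m =>
      exists_cEmb_of_not_range r (hnr m)
    choose g hg using hex
    have ginj : Function.Injective g := by
      intro m₁ m₂ h12
      have : σ (cEmb c m₁) = σ (cEmb c m₂) := by rw [← hg m₁, ← hg m₂, h12]
      exact (cEmb c).injective (σ.injective this)
    have gbij : Function.Bijective g := Finite.injective_iff_bijective.mp ginj
    refine ⟨Equiv.ofBijective g gbij, Finset.mem_univ _, ?_⟩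
    ext x
    obtain ⟨y, rfl⟩ := (sumEquiv c).surjective x
    cases y with
    | inl k =>
      rw [sumEquiv_inl, Perm.mul_apply, extPermR_fix, hcond k, hτ₀]
      simp only [Equiv.trans_apply, sumEquiv_symm_emb, sumEquiv_inl]
    | inr m =>
      rw [sumEquiv_inr, Perm.mul_apply, extPermR_apply, hτ₀]
      simp only [Equiv.trans_apply, sumEquiv_symm_cEmb, sumEquiv_inr]
      rw [show (Equiv.ofBijective g gbij) m = g m from rfl, hg m]
  · intro β _
    show (Perm.sign τ₀ : ℤ) • (Perm.sign β •
        ∏ i, (genMatrix p).submatrix (⇑(cEmb r)) (⇑(cEmb c)) (β i) i)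
      = (Perm.sign (τ₀ * extPermR c β) : ℤ) •
        ∏ i ∈ Finset.univ \ Finset.univ.image (fun i => c i), (X ((τ₀ * extPermR c β) i, i) : Rp p)
    have hmon : (∏ i ∈ Finset.univ \ Finset.univ.image (fun i => c i),
        (X ((τ₀ * extPermR c β) i, i) : Rp p))
        = ∏ m, (X (cEmb r (β m), cEmb c m) : Rp p) := by
      rw [sdiff_image_eq c, Finset.prod_image (fun m _ m' _ h => (cEmb c).injective h)]
      refine Finset.prod_congr rfl (fun m _ => ?_)
      rw [Perm.mul_apply, extPermR_apply, hτ₀]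
      simp only [Equiv.trans_apply, sumEquiv_symm_cEmb, sumEquiv_inr]
    rw [hmon, Perm.sign_mul, Units.val_mul, mul_smul, Units.smul_def]
    rw [sign_extPermR]
    rfl

end Emb

section Laplace

variable {s : ℕ}

/-- embedding `Fin s ↪ Fin (s+1)` hitting everything except `j`, matching
`decomposeFin`'s combinatorics -/
def mEmb (j : Fin (s+1)) : Fin s ↪ Fin (s+1) :=
  ⟨fun i => Equiv.swap 0 j i.succ,
   fun a b h => Fin.succ_injective s ((Equiv.swap 0 j).injective h)⟩

lemma ite_units_cast (j : Fin (s+1)) :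
    (((if j = 0 then (1:ℤˣ) else -1) : ℤˣ) : ℤ) = (if j = 0 then (1:ℤ) else -1) := by
  split <;> rfl

lemma laplaceD (r c : Fin (s+1) ↪ Fin p) (P : Rp p) :
    ∑ π : Perm (Fin (s+1)), (Perm.sign π : ℤ) • Dop (fun i => (r i, c (π i))) P
    = ∑ j : Fin (s+1), (if j = 0 then (1:ℤ) else -1) •
        pderiv (r 0, c j) (∑ π' : Perm (Fin s), (Perm.sign π' : ℤ) •
          Dop (fun i => (r (Fin.succ i), c (mEmb j (π' i)))) P) := by
  rw [← Equiv.sum_comp Perm.decomposeFin.symm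
      (fun π => (Perm.sign π : ℤ) • Dop (fun i => (r i, c (π i))) P), Fintype.sum_prod_type]
  refine Finset.sum_congr rfl (fun j _ => ?_)
  rw [map_sum, Finset.smul_sum]
  refine Finset.sum_congr rfl (fun π' _ => ?_)
  have hzero : (Perm.decomposeFin.symm (j, π')) 0 = j := Perm.decomposeFin_symm_apply_zero j π'
  have hfun : ((fun i => (r i, c ((Perm.decomposeFin.symm (j, π')) i))) ∘ Fin.succ)
      = fun i => (r (Fin.succ i), c (mEmb j (π' i))) := by
    funext i
    simp only [Function.comp_apply]
    rw [Perm.decomposeFin_symm_apply_succ]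
    rfl
  rw [Dop_succ, hfun, hzero, Perm.decomposeFin.symm_sign, Units.val_mul, mul_smul,
    ite_units_cast, map_zsmul]

lemma laplaceDet {S : Type*} [CommRing S] (A : Matrix (Fin (s+1)) (Fin (s+1)) S) :
    A.det = ∑ j : Fin (s+1), (if j = 0 then (1:ℤ) else -1) •
      (A 0 j * (A.submatrix Fin.succ (fun i => mEmb j i)).det) := by
  conv_lhs => rw [← Matrix.det_transpose, Matrix.det_apply]
  rw [← Equiv.sum_comp Perm.decomposeFin.symm
      (fun π => Perm.sign π • ∏ i, A.transpose (π i) i), Fintype.sum_prod_type]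
  refine Finset.sum_congr rfl (fun j _ => ?_)
  have inner : ∀ j, (A.submatrix Fin.succ (fun i => mEmb j i)).det
      = ∑ π' : Perm (Fin s), Perm.sign π' • ∏ i, A (Fin.succ i) (mEmb j (π' i)) := by
    intro j
    rw [← Matrix.det_transpose, Matrix.det_apply]
    refine Finset.sum_congr rfl (fun π' _ => ?_)
    congr 1
  rw [inner, Finset.mul_sum, Finset.smul_sum]
  refine Finset.sum_congr rfl (fun π' _ => ?_)
  have hprod : ∏ i, A.transpose ((Perm.decomposeFin.symm (j, π')) i) i
      = A 0 j * ∏ i, A (Fin.succ i) (mEmb j (π' i)) := by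
    rw [show (∏ i, A.transpose ((Perm.decomposeFin.symm (j, π')) i) i)
        = ∏ i, A i ((Perm.decomposeFin.symm (j, π')) i) from rfl]
    rw [Fin.prod_univ_succ]
    congr 1
    · rw [Perm.decomposeFin_symm_apply_zero]
    · refine Finset.prod_congr rfl (fun i _ => ?_)
      rw [Perm.decomposeFin_symm_apply_succ]
      rfl
  rw [hprod, Perm.decomposeFin.symm_sign, Units.smul_def, Units.smul_def, Units.val_mul,
    mul_smul, ite_units_cast]
  rw [mul_smul_comm]

end Laplace

section Adj

lemma pderiv_det_eq_adjugate (a b : Fin p) :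
    pderiv (a, b) (genMatrix p).det = (genMatrix p).adjugate b a := by
  classical
  have h0 : pderiv (a, b) (genMatrix p).det
      = Dop (fun _ : Fin 1 => ((fun (_ : Fin 1) => a) 0, (fun (_ : Fin 1) => b) 0)) (genMatrix p).det := by
    rw [Dop_succ, Dop_zero_fn]
  rw [h0]
  have h1 : (fun (_ : Fin 1) => ((fun (_ : Fin 1) => a) 0, (fun (_ : Fin 1) => b) 0))
      = fun i : Fin 1 => ((fun (_ : Fin 1) => a) i, (fun (_ : Fin 1) => b) i) := by
    funext i; rfl
  rw [h1, Dop_det (fun _ : Fin 1 => a) (fun _ : Fin 1 => b)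
    (fun x y _ => Subsingleton.elim x y)]
  rw [Matrix.adjugate_apply, Matrix.det_apply]
  refine Finset.sum_congr rfl (fun σ _ => ?_)
  rw [Units.smul_def]
  congr 1
  have himg : Finset.univ.image (fun _ : Fin 1 => b) = {b} :=
    Finset.image_const ⟨0, Finset.mem_univ 0⟩ b
  rw [himg, Finset.sdiff_singleton_eq_erase]
  have hsplit := Finset.mul_prod_erase Finset.univ
    (fun i => ((genMatrix p).updateRow a (Pi.single b 1)) (σ i) i) (Finset.mem_univ (σ⁻¹ a))
  rw [← hsplit]
  beta_reduce
  by_cases hba : σ b = a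
  · have hib : σ⁻¹ a = b := by rw [← hba, Perm.inv_apply_self]
    rw [if_pos (fun _ => hba)]
    have hone : ((genMatrix p).updateRow a (Pi.single b 1)) (σ (σ⁻¹ a)) (σ⁻¹ a) = 1 := by
      rw [Equiv.Perm.apply_inv_self, Matrix.updateRow_apply, if_pos rfl, hib, Pi.single_eq_same]
    rw [hone, one_mul, hib]
    refine (Finset.prod_congr rfl (fun i hi => ?_)).symm
    rw [Matrix.updateRow_apply, if_neg]
    · rfl
    · intro hia
      have : i = σ⁻¹ a := by rw [← hia, Perm.inv_apply_self]
      rw [hib] at this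
      exact (Finset.ne_of_mem_erase hi) this
  · have hib : σ⁻¹ a ≠ b := fun h => hba (by rw [← h, Equiv.Perm.apply_inv_self])
    rw [if_neg (fun h => hba (h 0))]
    have hzero : ((genMatrix p).updateRow a (Pi.single b 1)) (σ (σ⁻¹ a)) (σ⁻¹ a) = 0 := by
      rw [Equiv.Perm.apply_inv_self, Matrix.updateRow_apply, if_pos rfl,
        Pi.single_eq_of_ne hib]
    rw [hzero, zero_mul]

lemma det_genMatrix_ne_zero : (genMatrix p).det ≠ 0 := by
  intro h
  have h2 := congrArg (eval (fun v : Fin p × Fin p => if v.1 = v.2 then (1:ℚ) else 0)) h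
  rw [map_zero, RingHom.map_det] at h2
  have h3 : (eval (fun v : Fin p × Fin p => if v.1 = v.2 then (1:ℚ) else 0)).mapMatrix (genMatrix p)
      = (1 : Matrix (Fin p) (Fin p) ℚ) := by
    ext i j
    rw [RingHom.mapMatrix_apply]
    show eval _ (X (i, j)) = (1 : Matrix (Fin p) (Fin p) ℚ) i j
    rw [eval_X, Matrix.one_apply]
  rw [h3, Matrix.det_one] at h2
  exact one_ne_zero h2

end Adj

section Jacobi

/-- matrix of cofactor-derivatives -/
noncomputable def CofM {t : ℕ} (r c : Fin t ↪ Fin p) : Matrix (Fin t) (Fin t) (Rp p) :=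
  Matrix.of fun i j => pderiv (r i, c j) (genMatrix p).det

set_option maxHeartbeats 2000000 in
lemma jacobi {t : ℕ} (r c : Fin (t+1) ↪ Fin p) :
    (CofM r c).det = (genMatrix p).det ^ t * Nmin r c := by
  classical
  set K := FractionRing (Rp p) with hK
  set φ : Rp p →+* K := (algebraMap (Rp p) K : Rp p →+* K) with hφ
  have hinj : Function.Injective φ := IsFractionRing.injective (Rp p) K
  apply hinj
  set A : Matrix (Fin p) (Fin p) K := (genMatrix p).map φ with hA
  have hdet : A.det = φ (genMatrix p).det := by
    rw [hA, ← RingHom.mapMatrix_apply, ← RingHom.map_det]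
  have hd0 : A.det ≠ 0 := by
    rw [hdet]
    intro h
    exact det_genMatrix_ne_zero (hinj (by rw [h, map_zero]))
  have hu : IsUnit A.det := isUnit_iff_ne_zero.mpr hd0
  have hadj : ((genMatrix p).adjugate).map φ = A.adjugate := by
    rw [hA, ← RingHom.mapMatrix_apply, ← RingHom.mapMatrix_apply, RingHom.map_adjugate]
  have hCof : (CofM r c).map φ = ((A.adjugate).submatrix (⇑c) (⇑r)).transpose := by
    ext i j
    show φ (pderiv (r i, c j) (genMatrix p).det) = A.adjugate (c j) (r i)
    rw [pderiv_det_eq_adjugate, ← hadj]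
    rfl
  have hinvadj : A.adjugate = A.det • A⁻¹ := by
    rw [Matrix.inv_def, smul_smul, Ring.mul_inverse_cancel _ hu, one_smul]
  -- blocks
  set er := sumEquiv r with her
  set ec := sumEquiv c with hec
  set B := A.submatrix ⇑er ⇑ec with hB
  set W := A⁻¹.submatrix ⇑ec ⇑er with hW
  have hBW : B * W = 1 := by
    rw [hB, hW, Matrix.submatrix_mul_equiv, Matrix.mul_nonsing_inv A hu,
      Matrix.submatrix_one_equiv]
  have hBW' : Matrix.fromBlocks
      (B.toBlocks₁₁ * W.toBlocks₁₁ + B.toBlocks₁₂ * W.toBlocks₂₁)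
      (B.toBlocks₁₁ * W.toBlocks₁₂ + B.toBlocks₁₂ * W.toBlocks₂₂)
      (B.toBlocks₂₁ * W.toBlocks₁₁ + B.toBlocks₂₂ * W.toBlocks₂₁)
      (B.toBlocks₂₁ * W.toBlocks₁₂ + B.toBlocks₂₂ * W.toBlocks₂₂)
      = Matrix.fromBlocks 1 0 0 1 := by
    rw [← Matrix.fromBlocks_multiply, Matrix.fromBlocks_toBlocks, Matrix.fromBlocks_toBlocks,
      hBW, Matrix.fromBlocks_one]
  have e11 : B.toBlocks₁₁ * W.toBlocks₁₁ + B.toBlocks₁₂ * W.toBlocks₂₁ = 1 := by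
    have := congrArg Matrix.toBlocks₁₁ hBW'
    simpa only [Matrix.toBlocks_fromBlocks₁₁] using this
  have e21 : B.toBlocks₂₁ * W.toBlocks₁₁ + B.toBlocks₂₂ * W.toBlocks₂₁ = 0 := by
    have := congrArg Matrix.toBlocks₂₁ hBW'
    simpa only [Matrix.toBlocks_fromBlocks₂₁] using this
  have hmain : B * Matrix.fromBlocks W.toBlocks₁₁ 0 W.toBlocks₂₁ 1
      = Matrix.fromBlocks 1 B.toBlocks₁₂ 0 B.toBlocks₂₂ := by
    conv_lhs => rw [← Matrix.fromBlocks_toBlocks B]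
    rw [Matrix.fromBlocks_multiply]
    rw [Matrix.mul_zero, Matrix.mul_zero, Matrix.mul_one, Matrix.mul_one, zero_add, zero_add,
      e11, e21]
  have hdets : B.det * (W.toBlocks₁₁).det = (B.toBlocks₂₂).det := by
    have h := congrArg Matrix.det hmain
    rw [Matrix.det_mul, Matrix.det_fromBlocks_zero₁₂, Matrix.det_fromBlocks_zero₂₁,
      Matrix.det_one, Matrix.det_one, one_mul, mul_one] at h
    exact h
  -- the permutation signs
  set τ₀ : Perm (Fin p) := (sumEquiv c).symm.trans (sumEquiv r) with hτ₀
  set σB : Perm (Fin (t+1) ⊕ Fin (p - (t+1))) := er.trans ec.symm with hσB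
  have hsign : Perm.sign σB = Perm.sign τ₀ := by
    have hperm : σB = (Equiv.permCongr ec.symm) τ₀ := by
      ext x
      simp only [hσB, hτ₀, Equiv.permCongr_apply, Equiv.trans_apply, Equiv.symm_symm,
        Equiv.symm_apply_apply, her, hec]
    rw [hperm, Perm.sign_permCongr]
  have hBperm : B = ((A.submatrix ⇑ec ⇑ec).submatrix ⇑σB id) := by
    ext i j
    simp only [hB, hσB, Matrix.submatrix_apply, Equiv.trans_apply, id_eq,
      Equiv.apply_symm_apply]
  have hdetB : B.det = ((Perm.sign τ₀ : ℤ) : K) * A.det := by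
    rw [hBperm, Matrix.det_permute, Matrix.det_submatrix_equiv_self, hsign]
  have hW11 : W.toBlocks₁₁ = A⁻¹.submatrix (⇑c) (⇑r) := by
    ext i j
    rfl
  have hB22 : B.toBlocks₂₂ = ((genMatrix p).submatrix (⇑(cEmb r)) (⇑(cEmb c))).map φ := by
    ext i j
    rfl
  have hNmin : φ (Nmin r c) = ((Perm.sign τ₀ : ℤ) : K) * (B.toBlocks₂₂).det := by
    rw [Nmin_eq_det, zsmul_eq_mul, map_mul, map_intCast, hB22, ← Matrix.submatrix_map,
      ← hτ₀]
    congr 1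
    rw [RingHom.map_det, RingHom.mapMatrix_apply, Matrix.submatrix_map]
  -- left side
  have hLHS : φ (CofM r c).det = A.det ^ (t+1) * (W.toBlocks₁₁).det := by
    rw [RingHom.map_det, RingHom.mapMatrix_apply, hCof, Matrix.det_transpose, hinvadj]
    have : ((A.det • A⁻¹).submatrix (⇑c) (⇑r)) = A.det • (A⁻¹.submatrix (⇑c) (⇑r)) := rfl
    rw [this, Matrix.det_smul, Fintype.card_fin, hW11]
  -- final computation
  have hsq : ((Perm.sign τ₀ : ℤ) : K) * ((Perm.sign τ₀ : ℤ) : K) = 1 := by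
    rcases Int.units_eq_one_or (Perm.sign τ₀) with h | h <;> rw [h] <;> norm_num
  have hcancel : B.det ≠ 0 := by
    rw [hdetB]
    intro h
    rcases mul_eq_zero.mp h with h | h
    · rcases Int.units_eq_one_or (Perm.sign τ₀) with h2 | h2 <;> rw [h2] at h <;> norm_num at h
    · exact hd0 h
  apply mul_left_cancel₀ hcancel
  rw [hLHS, map_mul, hNmin, map_pow, ← hdet]
  have hkey : ((Perm.sign τ₀ : ℤ) : K) * A.det * (A.det ^ t * (((Perm.sign τ₀ : ℤ) : K) * (B.toBlocks₂₂).det))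
      = (((Perm.sign τ₀ : ℤ) : K) * ((Perm.sign τ₀ : ℤ) : K)) * (A.det ^ (t+1) * (B.toBlocks₂₂).det) := by
    rw [pow_succ]; ring
  calc B.det * (A.det ^ (t+1) * (W.toBlocks₁₁).det)
      = A.det ^ (t+1) * (B.det * (W.toBlocks₁₁).det) := by ring
    _ = A.det ^ (t+1) * (B.toBlocks₂₂).det := by rw [hdets]
    _ = B.det * (A.det ^ t * (((Perm.sign τ₀ : ℤ) : K) * (B.toBlocks₂₂).det)) := by
        rw [hdetB, hkey, hsq, one_mul]

end Jacobi

section Main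

lemma pderiv_pow (v : Fin p × Fin p) (f : Rp p) (k : ℕ) :
    pderiv v (f ^ (k+1)) = (k+1 : ℕ) • (f ^ k * pderiv v f) := by
  induction k with
  | zero => simp
  | succ k ihk =>
    rw [pow_succ, pderiv_mul, ihk]
    rw [nsmul_eq_mul, nsmul_eq_mul]
    push_cast
    ring

lemma lemma3 {s : ℕ} (r c : Fin (s+1) ↪ Fin p) :
    ∑ j : Fin (s+1), (if j = 0 then (1:ℤ) else -1) •
      (pderiv (r 0, c j) (genMatrix p).det * Nmin ((Fin.succEmb s).trans r) ((mEmb j).trans c))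
    = (genMatrix p).det * Nmin r c := by
  cases s with
  | zero =>
    rw [Fin.sum_univ_one, if_pos rfl, one_smul]
    have h1 : Nmin ((Fin.succEmb 0).trans r) ((mEmb 0).trans c) = (genMatrix p).det := rfl
    have h2 : Nmin r c = pderiv (r 0, c 0) (genMatrix p).det := by
      rw [Nmin, Dop_succ, Dop_zero_fn]
    rw [h1, h2, mul_comm]
  | succ s' =>
    have hd : (genMatrix p).det ^ s' ≠ 0 := pow_ne_zero _ det_genMatrix_ne_zero
    apply mul_left_cancel₀ hd
    rw [Finset.mul_sum]
    have step : ∀ j : Fin (s'+2), (genMatrix p).det ^ s' * ((if j = 0 then (1:ℤ) else -1) •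
        (pderiv (r 0, c j) (genMatrix p).det * Nmin ((Fin.succEmb (s'+1)).trans r) ((mEmb j).trans c)))
        = (if j = 0 then (1:ℤ) else -1) •
          ((CofM r c) 0 j * ((CofM r c).submatrix Fin.succ (fun i => mEmb j i)).det) := by
      intro j
      rw [mul_smul_comm]
      congr 1
      have hsub : ((CofM r c).submatrix Fin.succ (fun i => mEmb j i))
          = CofM ((Fin.succEmb (s'+1)).trans r) ((mEmb j).trans c) := by
        ext i j'
        rfl
      rw [hsub, jacobi]
      rw [show (CofM r c) 0 j = pderiv (r 0, c j) (genMatrix p).det from rfl]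
      ring
    rw [Finset.sum_congr rfl (fun j _ => step j), ← laplaceDet (CofM r c), jacobi, pow_succ]
    ring

lemma lemma5 {s : ℕ} (r c : Fin (s+1) ↪ Fin p) :
    ∑ j : Fin (s+1), (if j = 0 then (1:ℤ) else -1) •
      pderiv (r 0, c j) (Nmin ((Fin.succEmb s).trans r) ((mEmb j).trans c))
    = (s + 1 : ℕ) • Nmin r c := by
  have hsq : ∀ {q : ℕ} (π : Perm (Fin q)), (Perm.sign π : ℤ) * (Perm.sign π : ℤ) = 1 := by
    intro q π
    rw [← Units.val_mul, Int.units_mul_self]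
    rfl
  have hlap := laplaceD r c (genMatrix p).det
  have hL : ∑ π : Perm (Fin (s+1)), (Perm.sign π : ℤ) •
      Dop (fun i => (r i, c (π i))) (genMatrix p).det
      = ((s+1).factorial : ℕ) • Nmin r c := by
    rw [Finset.sum_congr rfl (fun π _ => by
      rw [Dop_det_perm r c π, smul_smul, hsq π, one_smul]),
      Finset.sum_const, Finset.card_univ, Fintype.card_perm, Fintype.card_fin]
  have hR : ∀ j : Fin (s+1), (∑ π' : Perm (Fin s), (Perm.sign π' : ℤ) •
      Dop (fun i => (r (Fin.succ i), c (mEmb j (π' i)))) (genMatrix p).det)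
      = (s.factorial : ℕ) • Nmin ((Fin.succEmb s).trans r) ((mEmb j).trans c) := by
    intro j
    have hterm : ∀ π' : Perm (Fin s), (Perm.sign π' : ℤ) •
        Dop (fun i => (r (Fin.succ i), c (mEmb j (π' i)))) (genMatrix p).det
        = Nmin ((Fin.succEmb s).trans r) ((mEmb j).trans c) := by
      intro π'
      have h := Dop_det_perm ((Fin.succEmb s).trans r) ((mEmb j).trans c) π'
      rw [show Dop (fun i => (r (Fin.succ i), c (mEmb j (π' i)))) (genMatrix p).det
        = Dop (fun i => (((Fin.succEmb s).trans r) i, ((mEmb j).trans c) (π' i))) (genMatrix p).det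
        from rfl, h, smul_smul, hsq π', one_smul]
    rw [Finset.sum_congr rfl (fun π' _ => hterm π'), Finset.sum_const, Finset.card_univ,
      Fintype.card_perm, Fintype.card_fin]
  rw [hL] at hlap
  rw [Finset.sum_congr rfl (fun j _ => by rw [hR j])] at hlap
  have hlap2 : ((s+1).factorial : ℕ) • Nmin r c
      = (s.factorial : ℕ) • ∑ j : Fin (s+1), (if j = 0 then (1:ℤ) else -1) •
        pderiv (r 0, c j) (Nmin ((Fin.succEmb s).trans r) ((mEmb j).trans c)) := by
    rw [hlap, Finset.smul_sum]
    refine Finset.sum_congr rfl (fun j _ => ?_)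
    rw [map_nsmul, smul_comm]
  have hfac : ((s+1).factorial : ℕ) • Nmin r c
      = (s.factorial : ℕ) • ((s + 1 : ℕ) • Nmin r c) := by
    rw [smul_smul, Nat.factorial_succ, mul_comm]
  rw [hfac] at hlap2
  have hcast : ∀ x y : Rp p, (s.factorial : ℕ) • x = (s.factorial : ℕ) • y → x = y := by
    intro x y h
    have h2 : C ((s.factorial : ℚ)) * x = C ((s.factorial : ℚ)) * y := by
      rw [← smul_eq_C_mul, ← smul_eq_C_mul, Nat.cast_smul_eq_nsmul, Nat.cast_smul_eq_nsmul]
      exact h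
    refine mul_left_cancel₀ ?_ h2
    rw [Ne, MvPolynomial.C_eq_zero]
    exact_mod_cast s.factorial_ne_zero
  exact (hcast _ _ hlap2).symm

lemma prod_factorial (s : ℕ) :
    (∏ j ∈ Finset.range s, ((1:ℚ) + (j : ℚ))) = (s.factorial : ℚ) := by
  induction s with
  | zero => simp
  | succ s ihs =>
    rw [Finset.prod_range_succ, ihs, Nat.factorial_succ]
    push_cast
    ring

lemma Nmin_refl : Nmin (Function.Embedding.refl (Fin p)) (Function.Embedding.refl (Fin p)) = 1 := by
  classical
  have h1 : Nmin (Function.Embedding.refl (Fin p)) (Function.Embedding.refl (Fin p))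
      = Dop (fun i : Fin p => ((fun i => i) i, (fun i => i) i)) (genMatrix p).det := rfl
  rw [h1, Dop_det (fun i => i) (fun i => i) (fun x y h => h)]
  rw [Finset.sum_eq_single 1]
  · rw [if_pos (show ∀ k : Fin p, (1 : Perm (Fin p)) k = k from fun k => rfl)]
    have himg : Finset.univ.image (fun i : Fin p => i) = Finset.univ := Finset.image_id
    rw [himg, Finset.sdiff_self, Finset.prod_empty]
    simp
  · intro σ _ hσ
    rw [if_neg (fun h => hσ (Equiv.ext (fun k => h k))), smul_zero]
  · intro h
    exact absurd (Finset.mem_univ 1) h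

lemma claimB (s : ℕ) : ∀ (r c : Fin s ↪ Fin p) (m : ℕ),
    (∑ π : Perm (Fin s), (Perm.sign π : ℤ) •
      Dop (fun i => (r i, c (π i))) ((genMatrix p).det ^ (m+1)))
    = (∏ j ∈ Finset.range s, ((m : ℚ) + 1 + (j : ℚ))) •
      ((genMatrix p).det ^ m * Nmin r c) := by
  induction s with
  | zero =>
    intro r c m
    have huniq : ∀ π : Perm (Fin 0), π = 1 := fun π => Equiv.ext (fun i => i.elim0)
    rw [Finset.sum_eq_single 1 (fun π _ hne => absurd (huniq π) hne)
      (fun h => absurd (Finset.mem_univ 1) h)]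
    rw [Dop_zero_fn]
    have h0 : Nmin (r : Fin 0 ↪ Fin p) c = (genMatrix p).det := rfl
    rw [h0, Finset.range_zero, Finset.prod_empty, one_smul, ← pow_succ]
    simp
  | succ s ih =>
    intro r c m
    have hsq : ∀ (π : Perm (Fin (s+1))), (Perm.sign π : ℤ) * (Perm.sign π : ℤ) = 1 := by
      intro π
      rw [← Units.val_mul, Int.units_mul_self]
      rfl
    cases m with
    | zero =>
      have hL : ∀ π : Perm (Fin (s+1)), (Perm.sign π : ℤ) •
          Dop (fun i => (r i, c (π i))) ((genMatrix p).det ^ (0+1)) = Nmin r c := by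
        intro π
        rw [pow_one, Dop_det_perm r c π, smul_smul, hsq π, one_smul]
      rw [Finset.sum_congr rfl (fun π _ => hL π), Finset.sum_const, Finset.card_univ,
        Fintype.card_perm, Fintype.card_fin]
      rw [pow_zero, one_mul]
      have hcoef : (∏ j ∈ Finset.range (s+1), (((0:ℕ) : ℚ) + 1 + (j : ℚ)))
          = (((s+1).factorial : ℕ) : ℚ) := by
        rw [← prod_factorial (s+1)]
        refine Finset.prod_congr rfl (fun j _ => by push_cast; ring)
      rw [hcoef, Nat.cast_smul_eq_nsmul]
    | succ m' =>
      rw [laplaceD r c ((genMatrix p).det ^ (m'+1+1))]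
      have ih' : ∀ j : Fin (s+1), (∑ π' : Perm (Fin s), (Perm.sign π' : ℤ) •
          Dop (fun i => (r (Fin.succ i), c (mEmb j (π' i)))) ((genMatrix p).det ^ (m'+1+1)))
          = (∏ jj ∈ Finset.range s, (((m'+1 : ℕ) : ℚ) + 1 + (jj : ℚ))) •
            ((genMatrix p).det ^ (m'+1) * Nmin ((Fin.succEmb s).trans r) ((mEmb j).trans c)) :=
        fun j => ih ((Fin.succEmb s).trans r) ((mEmb j).trans c) (m'+1)
      rw [Finset.sum_congr rfl (fun j _ => by rw [ih' j])]
      have hterm : ∀ j : Fin (s+1), (if j = 0 then (1:ℤ) else -1) •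
          pderiv (r 0, c j) ((∏ jj ∈ Finset.range s, (((m'+1 : ℕ) : ℚ) + 1 + (jj : ℚ))) •
            ((genMatrix p).det ^ (m'+1) * Nmin ((Fin.succEmb s).trans r) ((mEmb j).trans c)))
          = (∏ jj ∈ Finset.range s, (((m'+1 : ℕ) : ℚ) + 1 + (jj : ℚ))) •
            ( (((m'+1 : ℕ)) : ℚ) • ((genMatrix p).det ^ m' *
                ((if j = 0 then (1:ℤ) else -1) • (pderiv (r 0, c j) (genMatrix p).det *
                  Nmin ((Fin.succEmb s).trans r) ((mEmb j).trans c))))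
              + (genMatrix p).det ^ (m'+1) *
                ((if j = 0 then (1:ℤ) else -1) •
                  pderiv (r 0, c j) (Nmin ((Fin.succEmb s).trans r) ((mEmb j).trans c))) ) := by
        intro j
        rw [smul_eq_C_mul, pderiv_mul, pderiv_C, zero_mul, zero_add, pderiv_mul, pderiv_pow]
        simp only [smul_eq_C_mul, zsmul_eq_mul, nsmul_eq_mul, map_natCast]
        ring
      rw [Finset.sum_congr rfl (fun j _ => hterm j), ← Finset.smul_sum,
        Finset.sum_add_distrib]
      have hX : (∑ j : Fin (s+1), (((m'+1 : ℕ)) : ℚ) • ((genMatrix p).det ^ m' *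
          ((if j = 0 then (1:ℤ) else -1) • (pderiv (r 0, c j) (genMatrix p).det *
            Nmin ((Fin.succEmb s).trans r) ((mEmb j).trans c)))))
          = (((m'+1 : ℕ)) : ℚ) • ((genMatrix p).det ^ m' * ((genMatrix p).det * Nmin r c)) := by
        rw [← Finset.smul_sum, ← Finset.mul_sum, lemma3 r c]
      have hY : (∑ j : Fin (s+1), (genMatrix p).det ^ (m'+1) *
          ((if j = 0 then (1:ℤ) else -1) •
            pderiv (r 0, c j) (Nmin ((Fin.succEmb s).trans r) ((mEmb j).trans c))))
          = (genMatrix p).det ^ (m'+1) * ((s + 1 : ℕ) • Nmin r c) := by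
        rw [← Finset.mul_sum, lemma5 r c]
      rw [hX, hY, Finset.prod_range_succ]
      simp only [smul_eq_C_mul, nsmul_eq_mul, map_mul, map_add, map_natCast, map_one]
      push_cast
      ring

end Main

end Cayley

/-- Cayley's identity: det(∂/∂z) det(z)^n = n(n+1)⋯(n+p−1) · det(z)^{n−1}. -/
theorem stmt_13 (p n : ℕ) (hn : 1 ≤ n) :
    detDerivApply p ((genMatrix p).det ^ n) =
      C (∏ j ∈ Finset.range p, ((n : ℚ) + j)) * (genMatrix p).det ^ (n - 1) := by
  obtain ⟨m, rfl⟩ : ∃ m, n = m + 1 := ⟨n - 1, (Nat.succ_pred_eq_of_pos hn).symm⟩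
  have hdd : detDerivApply p ((genMatrix p).det ^ (m+1))
      = ∑ π : Equiv.Perm (Fin p), (Equiv.Perm.sign π : ℤ) •
        Cayley.Dop (fun i => ((Function.Embedding.refl (Fin p)) i,
          (Function.Embedding.refl (Fin p)) (π i))) ((genMatrix p).det ^ (m+1)) := by
    refine Finset.sum_congr rfl (fun π _ => ?_)
    rw [Cayley.Dop_eq_foldr]
    rfl
  rw [hdd, Cayley.claimB p (Function.Embedding.refl (Fin p)) (Function.Embedding.refl (Fin p)) m,
    Cayley.Nmin_refl, mul_one, MvPolynomial.smul_eq_C_mul, Nat.add_sub_cancel]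
  congr 2
  refine Finset.prod_congr rfl (fun j _ => ?_)
  push_cast
  ring
end

section
/- Let f : ℝ^d → ℂ be smooth with all derivatives of moderate growth, and let Q : ℝ^m → ℝ^d be a polynomial map such that ‖Q(v)‖ ≥ c‖v‖² for some c > 0 and all v. Then for every Schwartz function g on ℝ^d, the pullback g ∘ Q is a Schwartz function on ℝ^m, and the map g ↦ g∘Q is continuous from the Schwartz space 𝒮(ℝ^d) to 𝒮(ℝ^m). -/
open SchwartzMap

section TG

variable {E F G : Type*} [NormedAddCommGroup E] [NormedSpace ℝ E]
  [NormedAddCommGroup F] [NormedSpace ℝ F] [NormedAddCommGroup G] [NormedSpace ℝ G]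

lemma tg_add {f g : E → F} (hf : Function.HasTemperateGrowth f)
    (hg : Function.HasTemperateGrowth g) :
    Function.HasTemperateGrowth (fun x => f x + g x) := by
  refine ⟨hf.1.add hg.1, fun n => ?_⟩
  obtain ⟨k1, C1, h1⟩ := hf.2 n
  obtain ⟨k2, C2, h2⟩ := hg.2 n
  refine ⟨max k1 k2, |C1| + |C2|, fun x => ?_⟩
  have h1x : (1:ℝ) ≤ 1 + ‖x‖ := le_add_of_nonneg_right (norm_nonneg x)
  have e : (fun x => f x + g x) = f + g := rfl
  rw [e, iteratedFDeriv_add_apply (hf.1.of_le (mod_cast le_top)).contDiffAt (hg.1.of_le (mod_cast le_top)).contDiffAt]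
  calc ‖iteratedFDeriv ℝ n f x + iteratedFDeriv ℝ n g x‖
      ≤ ‖iteratedFDeriv ℝ n f x‖ + ‖iteratedFDeriv ℝ n g x‖ := norm_add_le _ _
    _ ≤ C1 * (1 + ‖x‖) ^ k1 + C2 * (1 + ‖x‖) ^ k2 := add_le_add (h1 x) (h2 x)
    _ ≤ |C1| * (1 + ‖x‖) ^ (max k1 k2) + |C2| * (1 + ‖x‖) ^ (max k1 k2) := by
        gcongr <;> first
          | exact le_abs_self _
          | exact h1x
          | exact le_max_left _ _
          | exact le_max_right _ _
    _ = (|C1| + |C2|) * (1 + ‖x‖) ^ (max k1 k2) := by ring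

lemma tg_mul {f g : E → ℝ} (hf : Function.HasTemperateGrowth f)
    (hg : Function.HasTemperateGrowth g) :
    Function.HasTemperateGrowth (fun x => f x * g x) := by
  refine ⟨hf.1.mul hg.1, fun n => ?_⟩
  obtain ⟨k1, C1, hC1, h1⟩ := hf.norm_iteratedFDeriv_le_uniform n
  obtain ⟨k2, C2, hC2, h2⟩ := hg.norm_iteratedFDeriv_le_uniform n
  refine ⟨k1 + k2, (∑ i ∈ Finset.range (n+1), (n.choose i : ℝ)) * (C1 * C2), fun x => ?_⟩
  have h1x : (1:ℝ) ≤ 1 + ‖x‖ := le_add_of_nonneg_right (norm_nonneg x)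
  calc ‖iteratedFDeriv ℝ n (fun y => f y * g y) x‖
      ≤ ∑ i ∈ Finset.range (n + 1),
        (n.choose i : ℝ) * ‖iteratedFDeriv ℝ i f x‖ * ‖iteratedFDeriv ℝ (n - i) g x‖ :=
        norm_iteratedFDeriv_mul_le hf.1 hg.1 x (mod_cast le_top)
    _ ≤ ∑ i ∈ Finset.range (n + 1),
        (n.choose i : ℝ) * (C1 * C2 * (1 + ‖x‖) ^ (k1 + k2)) := by
        refine Finset.sum_le_sum fun i hi => ?_
        rw [Finset.mem_range, Nat.lt_succ_iff] at hi
        rw [mul_assoc]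
        gcongr (n.choose i : ℝ) * ?_
        have : ‖iteratedFDeriv ℝ i f x‖ * ‖iteratedFDeriv ℝ (n - i) g x‖
            ≤ (C1 * (1 + ‖x‖) ^ k1) * (C2 * (1 + ‖x‖) ^ k2) :=
          mul_le_mul (h1 i hi x) (h2 (n - i) (Nat.sub_le n i) x)
            (norm_nonneg _) (by positivity)
        calc ‖iteratedFDeriv ℝ i f x‖ * ‖iteratedFDeriv ℝ (n - i) g x‖
            ≤ (C1 * (1 + ‖x‖) ^ k1) * (C2 * (1 + ‖x‖) ^ k2) := this
          _ = C1 * C2 * (1 + ‖x‖) ^ (k1 + k2) := by rw [pow_add]; ring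
    _ = (∑ i ∈ Finset.range (n+1), (n.choose i : ℝ)) * (C1 * C2) * (1 + ‖x‖) ^ (k1 + k2) := by
        rw [Finset.sum_mul, Finset.sum_mul]
        exact Finset.sum_congr rfl fun i _ => by ring

lemma tg_clm_comp (L : F →L[ℝ] G) {f : E → F} (hf : Function.HasTemperateGrowth f) :
    Function.HasTemperateGrowth (fun x => L (f x)) := by
  refine ⟨L.contDiff.comp hf.1, fun n => ?_⟩
  obtain ⟨k, C, h⟩ := hf.2 n
  refine ⟨k, ‖L‖ * C, fun x => ?_⟩
  have e : (fun x => L (f x)) = ⇑L ∘ f := rfl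
  rw [e, L.iteratedFDeriv_comp_left (x := x) hf.1.contDiffAt (mod_cast le_top)]
  calc ‖L.compContinuousMultilinearMap (iteratedFDeriv ℝ n f x)‖
      ≤ ‖L‖ * ‖iteratedFDeriv ℝ n f x‖ := L.norm_compContinuousMultilinearMap_le _
    _ ≤ ‖L‖ * (C * (1 + ‖x‖) ^ k) := by gcongr; exact h x
    _ = ‖L‖ * C * (1 + ‖x‖) ^ k := by ring

lemma tg_sum {ι : Type*} (s : Finset ι) (f : ι → E → F)
    (hf : ∀ i ∈ s, Function.HasTemperateGrowth (f i)) :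
    Function.HasTemperateGrowth (fun x => ∑ i ∈ s, f i x) := by
  classical
  induction s using Finset.induction_on with
  | empty => simpa using Function.HasTemperateGrowth.zero
  | insert _ _ hni ih =>
    rename_i a s
    simp only [Finset.sum_insert hni]
    exact tg_add (hf a (Finset.mem_insert_self a s))
      (ih fun i hi => hf i (Finset.mem_insert_of_mem hi))

lemma tg_mvpoly (P : MvPolynomial (Fin m) ℝ) :
    Function.HasTemperateGrowth
      (fun v : EuclideanSpace ℝ (Fin m) => MvPolynomial.eval (fun j => v j) P) := by
  induction P using MvPolynomial.induction_on with
  | C a => simpa using Function.HasTemperateGrowth.const a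
  | add p q hp hq => simpa [MvPolynomial.eval_add] using tg_add hp hq
  | mul_X p j hp =>
    simp only [MvPolynomial.eval_mul, MvPolynomial.eval_X]
    exact tg_mul hp (EuclideanSpace.proj j).hasTemperateGrowth

end TG

/-- Pullback along a polynomial map Q with ‖Q(v)‖ ≥ c‖v‖² maps Schwartz functions
to Schwartz functions, continuously (stated in the presence of a smooth function f
of temperate growth, as in the superbosonisation setting). -/
theorem stmt_14 (d m : ℕ) (f : EuclideanSpace ℝ (Fin d) → ℂ)
    (hf : Function.HasTemperateGrowth f)
    (Q : EuclideanSpace ℝ (Fin m) → EuclideanSpace ℝ (Fin d))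
    (hQpoly : ∀ i : Fin d, ∃ P : MvPolynomial (Fin m) ℝ,
      ∀ v : EuclideanSpace ℝ (Fin m), Q v i = MvPolynomial.eval (fun j => v j) P)
    (c : ℝ) (hc : 0 < c)
    (hQgrow : ∀ v : EuclideanSpace ℝ (Fin m), c * ‖v‖ ^ 2 ≤ ‖Q v‖) :
    ∃ T : 𝓢(EuclideanSpace ℝ (Fin d), ℂ) →L[ℝ] 𝓢(EuclideanSpace ℝ (Fin m), ℂ),
      ∀ (g : 𝓢(EuclideanSpace ℝ (Fin d), ℂ)) (v : EuclideanSpace ℝ (Fin m)),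
        T g v = g (Q v) := by
  choose P hP using hQpoly
  have hQeq : Q = fun v => ∑ i : Fin d,
      (ContinuousLinearMap.toSpanSingleton ℝ (EuclideanSpace.single i (1:ℝ)))
        (MvPolynomial.eval (fun j => v j) (P i)) := by
    funext v
    ext j
    have hsum : (∑ i : Fin d,
        (ContinuousLinearMap.toSpanSingleton ℝ (EuclideanSpace.single i (1:ℝ)))
          (MvPolynomial.eval (fun k => v k) (P i))) j
        = ∑ i : Fin d, (MvPolynomial.eval (fun k => v k) (P i))
            • (EuclideanSpace.single i (1:ℝ)) j := by
      simp only [ContinuousLinearMap.toSpanSingleton_apply]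
      rw [WithLp.ofLp_sum]
      exact Finset.sum_apply j Finset.univ _
    rw [hsum]
    simp only [EuclideanSpace.single_apply, smul_eq_mul, mul_ite, mul_one, mul_zero,
      Finset.sum_ite_eq, Finset.mem_univ, if_true]
    exact hP j v
  have hQtg : Function.HasTemperateGrowth Q := by
    rw [hQeq]
    exact tg_sum _ _ fun i _ => tg_clm_comp _ (tg_mvpoly (P i))
  have hupper : ∃ (k : ℕ) (C : ℝ), ∀ v : EuclideanSpace ℝ (Fin m),
      ‖v‖ ≤ C * (1 + ‖Q v‖) ^ k := by
    refine ⟨1, max 1 c⁻¹, fun v => ?_⟩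
    rw [pow_one]
    have h1 : c * ‖v‖ ^ 2 ≤ ‖Q v‖ := hQgrow v
    have h2 : (1:ℝ) ≤ max 1 c⁻¹ := le_max_left _ _
    have h3 : c⁻¹ ≤ max 1 c⁻¹ := le_max_right _ _
    have h4 : (0:ℝ) ≤ ‖Q v‖ := norm_nonneg _
    have h5 : (0:ℝ) ≤ ‖v‖ := norm_nonneg _
    have h6 : ‖v‖ ^ 2 ≤ c⁻¹ * ‖Q v‖ := by
      rw [← le_div_iff₀' hc] at h1
      simpa [div_eq_inv_mul] using h1
    nlinarith [sq_nonneg (‖v‖ - 1)]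
  exact ⟨SchwartzMap.compCLM ℝ hQtg hupper, fun g v => rfl⟩
end
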